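/- If X is a Hermitian operator on ℂ^d ⊗ ℂ^d of rank 2 with trace 0 and vanishing partial trace over the first factor, then the partial transpose (Θ ⊗ id)(X) has rank at most d² − d. -/

import Mathlib

open Matrix Kronecker BigOperators
open scoped ComplexOrder

noncomputable def traceNorm {n : Type*} [Fintype n] [DecidableEq n] (X : Matrix n n ℂ) : ℝ :=
  (((Matrix.posSemidef_conjTranspose_mul_self X).1.eigenvectorUnitary : Matrix n n ℂ) *
      Matrix.diagonal ((fun x : ℝ => (x : ℂ)) ∘ (√·) ∘ (Matrix.posSemidef_conjTranspose_mul_self X).1.eigenvalues) *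
      (star (Matrix.posSemidef_conjTranspose_mul_self X).1.eigenvectorUnitary : Matrix n n ℂ)).trace.re

noncomputable def hsNorm {n : Type*} [Fintype n] (X : Matrix n n ℂ) : ℝ :=
  Real.sqrt ((Xᴴ * X).trace.re)

noncomputable def singularValues {n : Type*} [Fintype n] [DecidableEq n] (Y : Matrix n n ℂ) :
    n → ℝ :=
  fun i => Real.sqrt ((Matrix.posSemidef_conjTranspose_mul_self Y).1.eigenvalues i)

/-- Partial transpose on the first tensor factor. -/
def ptransp {d k : ℕ} (X : Matrix (Fin d × Fin k) (Fin d × Fin k) ℂ) :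
    Matrix (Fin d × Fin k) (Fin d × Fin k) ℂ :=
  fun p q => X (q.1, p.2) (p.1, q.2)

/-- Partial trace over the first tensor factor. -/
noncomputable def ptraceH {d k : ℕ} (X : Matrix (Fin d × Fin k) (Fin d × Fin k) ℂ) :
    Matrix (Fin k) (Fin k) ℂ :=
  fun j j' => ∑ i, X (i, j) (i, j')

def vec {d : ℕ} (A : Matrix (Fin d) (Fin d) ℂ) : Fin d × Fin d → ℂ := fun p => A p.1 p.2

/-- Outer product |v⟩⟨w|. -/
def outer {n : Type*} (v w : n → ℂ) : Matrix n n ℂ := fun i j => v i * star (w j)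

/-- The swap operator F(e_i ⊗ e_j) = e_j ⊗ e_i. -/
def swapOp (d : ℕ) : Matrix (Fin d × Fin d) (Fin d × Fin d) ℂ :=
  fun p q => if p.1 = q.2 ∧ p.2 = q.1 then 1 else 0

/-- Blockwise action of Φ ⊗ id on operators on H ⊗ K. -/
def tensorExt {d k : ℕ} (Φ : Matrix (Fin d) (Fin d) ℂ → Matrix (Fin d) (Fin d) ℂ)
    (Z : Matrix (Fin d × Fin k) (Fin d × Fin k) ℂ) :
    Matrix (Fin d × Fin k) (Fin d × Fin k) ℂ :=
  fun p q => Φ (fun a b => Z (a, p.2) (b, q.2)) p.1 q.1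

/-- Diamond norm (stabilized at ancilla dimension d). -/
noncomputable def diamondNorm {d : ℕ}
    (Φ : Matrix (Fin d) (Fin d) ℂ → Matrix (Fin d) (Fin d) ℂ) : ℝ :=
  ⨆ ρ : {ρ : Matrix (Fin d × Fin d) (Fin d × Fin d) ℂ // ρ.PosSemidef ∧ ρ.trace = 1},
    traceNorm (tensorExt Φ ρ.1)


section PtranspAux

open Module.End

local notation "conj'" => starRingEnd ℂ

private lemma rank_le_of_kernel {n : Type*} [Fintype n] [DecidableEq n] {m : ℕ} (Y : Matrix n n ℂ)
    (v : Fin m → (n → ℂ)) (hv : LinearIndependent ℂ v) (hker : ∀ k, Y.mulVec (v k) = 0) :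
    Y.rank + m ≤ Fintype.card n := by
  have hle : Submodule.span ℂ (Set.range v) ≤ LinearMap.ker Y.mulVecLin := by
    rw [Submodule.span_le]
    rintro _ ⟨k, rfl⟩
    exact hker k
  have h1 : m ≤ Module.finrank ℂ (LinearMap.ker Y.mulVecLin) := by
    have h2 := Submodule.finrank_mono hle
    rwa [finrank_span_eq_card hv, Fintype.card_fin] at h2
  have h2 := LinearMap.finrank_range_add_finrank_ker Y.mulVecLin
  rw [Module.finrank_fintype_fun_eq_card] at h2
  have h3 : Y.rank = Module.finrank ℂ (LinearMap.range Y.mulVecLin) := rfl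
  omega

variable {d : ℕ}

private lemma exists_unitary_of_gram_eq (A B : Matrix (Fin d) (Fin d) ℂ) (h : Aᴴ * A = Bᴴ * B) :
    ∃ U : Matrix (Fin d) (Fin d) ℂ, Uᴴ * U = 1 ∧ B = U * A := by
  classical
  let E := EuclideanSpace ℂ (Fin d)
  let f : E →ₗ[ℂ] E := Matrix.toEuclideanLin A
  let g : E →ₗ[ℂ] E := Matrix.toEuclideanLin B
  have key : ∀ (M : Matrix (Fin d) (Fin d) ℂ) (x y : E),
      (inner ℂ (Matrix.toEuclideanLin M x) (Matrix.toEuclideanLin M y) : ℂ)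
        = dotProduct (star ((WithLp.equiv 2 _) x)) ((Mᴴ * M) *ᵥ ((WithLp.equiv 2 _) y)) := by
    intro M x y
    have h1 : (inner ℂ (Matrix.toEuclideanLin M x) (Matrix.toEuclideanLin M y) : ℂ)
        = dotProduct (star (M *ᵥ (WithLp.equiv 2 _) x)) (M *ᵥ (WithLp.equiv 2 _) y) := by
      rw [PiLp.inner_apply]
      simp [dotProduct, RCLike.inner_apply]
      exact Finset.sum_congr rfl fun _ _ => by rw [mul_comm]
    rw [h1, star_mulVec, ← Matrix.dotProduct_mulVec, Matrix.mulVec_mulVec]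
  have hinner : ∀ x y : E, (inner ℂ (f x) (f y) : ℂ) = inner ℂ (g x) (g y) := by
    intro x y; rw [key A x y, key B x y, h]
  have hnorm : ∀ x : E, ‖f x‖ = ‖g x‖ := by
    intro x
    rw [@norm_eq_sqrt_re_inner ℂ, @norm_eq_sqrt_re_inner ℂ, hinner]
  have hker : LinearMap.ker f ≤ LinearMap.ker g := by
    intro x hx
    rw [LinearMap.mem_ker] at hx ⊢
    rw [← norm_eq_zero, ← hnorm, hx, norm_zero]
  let g' : (E ⧸ LinearMap.ker f) →ₗ[ℂ] E := Submodule.liftQ _ g hker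
  let e := LinearMap.quotKerEquivRange f
  let L0 : LinearMap.range f →ₗ[ℂ] E := g'.comp e.symm.toLinearMap
  have hL0 : ∀ x : E, L0 ⟨f x, LinearMap.mem_range_self f x⟩ = g x := by
    intro x
    have he : e.symm ⟨f x, LinearMap.mem_range_self f x⟩ = Submodule.Quotient.mk x := by
      rw [LinearEquiv.symm_apply_eq]
      exact Subtype.ext (f.quotKerEquivRange_apply_mk x).symm
    show g' (e.symm ⟨f x, LinearMap.mem_range_self f x⟩) = g x
    rw [he]
    exact Submodule.liftQ_apply _ g x
  let L : (LinearMap.range f) →ₗᵢ[ℂ] E := ⟨L0, by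
    rintro ⟨-, x, rfl⟩
    show ‖L0 ⟨f x, LinearMap.mem_range_self f x⟩‖ = _
    rw [hL0 x, ← hnorm x]
    rfl⟩
  let Ui := L.extend
  have hUi : ∀ x : E, Ui (f x) = g x := by
    intro x
    have h5 := L.extend_apply ⟨f x, LinearMap.mem_range_self f x⟩
    have h6 : L ⟨f x, LinearMap.mem_range_self f x⟩ = g x := hL0 x
    rw [h6] at h5
    exact h5
  let U : Matrix (Fin d) (Fin d) ℂ := Matrix.toEuclideanLin.symm Ui.toLinearMap
  have hU : ∀ x : E, Matrix.toEuclideanLin U x = Ui x := by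
    intro x
    rw [Matrix.toEuclideanLin.apply_symm_apply]
    rfl
  refine ⟨U, ?_, ?_⟩
  · have hcol : ∀ (a k : Fin d), U k a = (WithLp.equiv 2 _) (Ui (EuclideanSpace.single a 1)) k := by
      intro a k
      rw [← hU]
      have h8 : (WithLp.equiv 2 (Fin d → ℂ)) (Matrix.toEuclideanLin U (EuclideanSpace.single a 1))
          = U *ᵥ Pi.single a 1 := by
        rw [show ∀ (M : Matrix (Fin d) (Fin d) ℂ) (v : EuclideanSpace ℂ (Fin d)), WithLp.equiv 2 (Fin d → ℂ) (Matrix.toEuclideanLin M v) = M *ᵥ WithLp.equiv 2 (Fin d → ℂ) v from fun _ _ => rfl]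
        congr 1
      rw [h8]
      simp [Matrix.mulVec_single]
    ext i j
    rw [Matrix.mul_apply, Matrix.one_apply]
    have h9 : ∀ k, Uᴴ i k * U k j
        = star ((WithLp.equiv 2 _) (Ui (EuclideanSpace.single i 1)) k)
          * (WithLp.equiv 2 _) (Ui (EuclideanSpace.single j 1)) k := by
      intro k
      rw [Matrix.conjTranspose_apply, ← hcol, ← hcol]
    rw [Finset.sum_congr rfl fun k _ => h9 k]
    have h10 : (inner ℂ (Ui (EuclideanSpace.single i 1)) (Ui (EuclideanSpace.single j 1)) : ℂ)
        = ∑ k, star ((WithLp.equiv 2 _) (Ui (EuclideanSpace.single i 1)) k)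
          * (WithLp.equiv 2 _) (Ui (EuclideanSpace.single j 1)) k := by
      rw [PiLp.inner_apply]
      simp [RCLike.inner_apply]
      exact Finset.sum_congr rfl fun _ _ => mul_comm _ _
    rw [← h10, Ui.inner_map_map]
    rw [EuclideanSpace.inner_single_left]
    simp [EuclideanSpace.single_apply, eq_comm]
  · apply Matrix.toEuclideanLin.injective
    apply LinearMap.ext
    intro x
    refine Eq.symm ?_
    show Matrix.toEuclideanLin (U * A) x = g x
    have h7 : Matrix.toEuclideanLin (U * A) x = Matrix.toEuclideanLin U (f x) := by
      apply (WithLp.equiv 2 (Fin d → ℂ)).injective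
      simp only [show ∀ (M : Matrix (Fin d) (Fin d) ℂ) (v : EuclideanSpace ℂ (Fin d)), WithLp.equiv 2 (Fin d → ℂ) (Matrix.toEuclideanLin M v) = M *ᵥ WithLp.equiv 2 (Fin d → ℂ) v from fun _ _ => rfl]
      rw [← Matrix.mulVec_mulVec]
      rfl
    rw [h7, hU, hUi]

private lemma tel_mul (M N : Matrix (Fin d) (Fin d) ℂ) :
    Matrix.toEuclideanLin (M * N) = (Matrix.toEuclideanLin M) ∘ₗ (Matrix.toEuclideanLin N) := by
  rw [Matrix.toEuclideanLin_eq_toLin]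
  exact Matrix.toLin_mul (PiLp.basisFun 2 ℂ (Fin d)) (PiLp.basisFun 2 ℂ (Fin d)) (PiLp.basisFun 2 ℂ (Fin d)) M N

private lemma exists_joint_eigs (U : Matrix (Fin d) (Fin d) ℂ) (h1 : Uᴴ * U = 1) (h2 : U * Uᴴ = 1) :
    ∃ (t : Fin d → (Fin d → ℂ)) (l : Fin d → ℂ),
      LinearIndependent ℂ t ∧ (∀ k, t k ≠ 0) ∧
      (∀ k, U *ᵥ (t k) = l k • t k) ∧ (∀ k, Uᴴ *ᵥ (t k) = conj' (l k) • t k) := by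
  classical
  set E := EuclideanSpace ℂ (Fin d) with hE
  let u : E →ₗ[ℂ] E := Matrix.toEuclideanLin U
  let w : E →ₗ[ℂ] E := Matrix.toEuclideanLin Uᴴ
  set P : Matrix (Fin d) (Fin d) ℂ := U + Uᴴ with hPdef
  set Q : Matrix (Fin d) (Fin d) ℂ := Complex.I • (U - Uᴴ) with hQdef
  have hP : P.IsHermitian := by
    unfold P
    rw [Matrix.IsHermitian, conjTranspose_add, conjTranspose_conjTranspose, add_comm]
  have hQ : Q.IsHermitian := by
    unfold Q
    rw [Matrix.IsHermitian, conjTranspose_smul, conjTranspose_sub, conjTranspose_conjTranspose]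
    rw [Complex.star_def, Complex.conj_I, neg_smul, smul_sub, smul_sub, neg_sub]
  have hPQ : P * Q = Q * P := by
    have key : (U + Uᴴ) * (U - Uᴴ) = (U - Uᴴ) * (U + Uᴴ) := by
      rw [add_mul, mul_sub, mul_sub, sub_mul, mul_add, mul_add, h1, h2]
      abel
    unfold P Q
    rw [Matrix.mul_smul, Matrix.smul_mul, key]
  have hp : (Matrix.toEuclideanLin P).IsSymmetric := Matrix.isHermitian_iff_isSymmetric.mp hP
  have hq : (Matrix.toEuclideanLin Q).IsSymmetric := Matrix.isHermitian_iff_isSymmetric.mp hQ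
  have hcomm : Commute (Matrix.toEuclideanLin P) (Matrix.toEuclideanLin Q) := by
    unfold Commute SemiconjBy
    rw [Module.End.mul_eq_comp, Module.End.mul_eq_comp, ← tel_mul, ← tel_mul, hPQ]
  have hTop := LinearMap.IsSymmetric.iSup_iSup_eigenspace_inf_eigenspace_eq_top_of_commute
    hp hq hcomm
  set S : Set E := {x | ∃ l : ℂ, u x = l • x ∧ w x = conj' l • x} with hSdef
  have hspanS : Submodule.span ℂ S = ⊤ := by
    rw [eq_top_iff, ← hTop]
    refine iSup_le fun α => iSup_le fun γ => ?_
    intro x hx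
    obtain ⟨hxP, hxQ⟩ := hx
    by_cases hx0 : x = 0
    · rw [hx0]; exact Submodule.zero_mem _
    apply Submodule.subset_span
    have hxP' : Matrix.toEuclideanLin P x = α • x := Module.End.mem_eigenspace_iff.mp hxP
    have hxQ' : Matrix.toEuclideanLin Q x = γ • x := Module.End.mem_eigenspace_iff.mp hxQ
    have hα : conj' α = α := hp.conj_eigenvalue_eq_self
      (hasEigenvalue_of_hasEigenvector ⟨hxP, hx0⟩)
    have hγ : conj' γ = γ := hq.conj_eigenvalue_eq_self
      (hasEigenvalue_of_hasEigenvector ⟨hxQ, hx0⟩)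
    -- u x and w x from P, Q
    have hPx : u x + w x = α • x := by
      have := hxP'
      rwa [hPdef, map_add] at this
    have hQx : u x - w x = (-Complex.I * γ) • x := by
      have h3 := hxQ'
      rw [hQdef, _root_.map_smul, LinearMap.smul_apply, _root_.map_sub,
        LinearMap.sub_apply] at h3
      have h4 := congrArg (fun y => (-Complex.I : ℂ) • y) h3
      simp only [smul_smul] at h4
      rw [neg_mul, Complex.I_mul_I, neg_neg, one_smul] at h4
      exact h4
    refine ⟨(α - Complex.I * γ) / 2, ?_, ?_⟩
    · have := congrArg₂ (· + ·) hPx hQx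
      simp only [add_add_sub_cancel] at this
      have h5 : (2 : ℂ) • u x = (α + -Complex.I * γ) • x := by
        rw [two_smul, this, add_smul]
      have := congrArg (fun y => ((2:ℂ)⁻¹ : ℂ) • y) h5
      simp only [smul_smul] at this
      rw [inv_mul_cancel₀ (two_ne_zero), one_smul] at this
      rw [this]
      congr 1
      field_simp
      ring
    · have := congrArg₂ (· - ·) hPx hQx
      simp only [add_sub_sub_cancel] at this
      have h5 : (2 : ℂ) • w x = (α - -Complex.I * γ) • x := by
        rw [two_smul, this, sub_smul]
      have := congrArg (fun y => ((2:ℂ)⁻¹ : ℂ) • y) h5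
      simp only [smul_smul] at this
      rw [inv_mul_cancel₀ (two_ne_zero), one_smul] at this
      rw [this]
      congr 1
      simp only [map_div₀, _root_.map_sub, _root_.map_mul, Complex.conj_I, hα, hγ, map_ofNat]
      ring
  obtain ⟨b, hbS, hbspan, hbind⟩ := exists_linearIndependent ℂ S
  rw [hspanS] at hbspan
  have hbas : Module.Basis b ℂ E := Module.Basis.mk hbind (by rw [Subtype.range_coe, hbspan])
  haveI : Fintype b := FiniteDimensional.fintypeBasisIndex hbas
  have hcard : Fintype.card b = d := by
    have := Module.finrank_eq_card_basis hbas
    rwa [finrank_euclideanSpace_fin, eq_comm] at this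
  let e : Fin d ≃ b := (Fintype.equivFinOfCardEq hcard).symm
  let t : Fin d → (Fin d → ℂ) := fun k => (WithLp.equiv 2 (Fin d → ℂ)) ((e k : E))
  have hmem : ∀ k : Fin d, ∃ l : ℂ, u (e k : E) = l • (e k : E) ∧ w (e k : E) = conj' l • (e k : E) :=
    fun k => hbS (e k).2
  choose l hl1 hl2 using hmem
  have hind : LinearIndependent ℂ t := by
    have h6 : LinearIndependent ℂ (fun x : b => (x : E)) := hbind
    have h7 := h6.comp e e.injective
    exact h7.map' (WithLp.linearEquiv 2 ℂ (Fin d → ℂ)).toLinearMap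
      (LinearMap.ker_eq_bot_of_injective (WithLp.linearEquiv 2 ℂ (Fin d → ℂ)).injective)
  refine ⟨t, l, hind, fun k => hind.ne_zero k, ?_, ?_⟩
  · intro k
    have := congrArg (WithLp.equiv 2 (Fin d → ℂ)) (hl1 k)
    rwa [show ∀ (M : Matrix (Fin d) (Fin d) ℂ) (v : EuclideanSpace ℂ (Fin d)), WithLp.equiv 2 (Fin d → ℂ) (Matrix.toEuclideanLin M v) = M *ᵥ WithLp.equiv 2 (Fin d → ℂ) v from fun _ _ => rfl, show ∀ (c : ℂ) (v : EuclideanSpace ℂ (Fin d)), WithLp.equiv 2 (Fin d → ℂ) (c • v) = c • WithLp.equiv 2 (Fin d → ℂ) v from fun _ _ => rfl] at this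
  · intro k
    have := congrArg (WithLp.equiv 2 (Fin d → ℂ)) (hl2 k)
    rwa [show ∀ (M : Matrix (Fin d) (Fin d) ℂ) (v : EuclideanSpace ℂ (Fin d)), WithLp.equiv 2 (Fin d → ℂ) (Matrix.toEuclideanLin M v) = M *ᵥ WithLp.equiv 2 (Fin d → ℂ) v from fun _ _ => rfl, show ∀ (c : ℂ) (v : EuclideanSpace ℂ (Fin d)), WithLp.equiv 2 (Fin d → ℂ) (c • v) = c • WithLp.equiv 2 (Fin d → ℂ) v from fun _ _ => rfl] at this

private lemma decomp {n : Type*} [Fintype n] [DecidableEq n] (X : Matrix n n ℂ) (hX : X.IsHermitian)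
    (htr : X.trace = 0) (hrk : X.rank = 2) :
    ∃ (c : ℝ) (a b : n → ℂ), c ≠ 0 ∧ a ≠ 0 ∧ b ≠ 0 ∧
      ∀ p q, X p q = (c : ℂ) * (a p * conj' (a q)) - (c : ℂ) * (b p * conj' (b q)) := by
  classical
  set E := hX.eigenvalues with hEdef
  have hcard : (Finset.univ.filter fun i => E i ≠ 0).card = 2 := by
    have := hX.rank_eq_card_non_zero_eigs
    rw [hrk, Fintype.card_subtype] at this
    exact this.symm
  obtain ⟨i, j, hij, hset⟩ := Finset.card_eq_two.mp hcard
  have hi : E i ≠ 0 := by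
    have : i ∈ Finset.univ.filter fun k => E k ≠ 0 := by rw [hset]; simp
    simpa using this
  have hj : E j ≠ 0 := by
    have : j ∈ Finset.univ.filter fun k => E k ≠ 0 := by rw [hset]; simp
    simpa using this
  have hzero : ∀ k, k ≠ i → k ≠ j → E k = 0 := by
    intro k hki hkj
    by_contra hk
    have : k ∈ Finset.univ.filter fun m => E m ≠ 0 := by simpa using hk
    rw [hset] at this
    simp only [Finset.mem_insert, Finset.mem_singleton] at this
    tauto
  -- trace = sum of eigenvalues
  have htrsum : X.trace = ∑ k, (E k : ℂ) := by
    conv_lhs => rw [hX.spectral_theorem, Unitary.conjStarAlgAut_apply]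
    rw [Matrix.trace_mul_cycle]
    rw [Unitary.coe_star_mul_self (hX.eigenvectorUnitary)]
    rw [one_mul, Matrix.trace_diagonal]
    rfl
  have hsum0 : E i + E j = 0 := by
    have h1 : ∑ k, (E k : ℂ) = (E i : ℂ) + E j := by
      have h1a : ∑ k, (E k : ℂ) = ∑ k ∈ ({i, j} : Finset n), (E k : ℂ) := by
        apply (Finset.sum_subset (Finset.subset_univ _) _).symm
        intro k _ hk
        simp only [Finset.mem_insert, Finset.mem_singleton] at hk
        push_neg at hk
        rw [hzero k hk.1 hk.2, Complex.ofReal_zero]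
      rw [h1a, Finset.sum_pair hij]
    rw [htr] at htrsum
    have h2 : ((E i + E j : ℝ) : ℂ) = 0 := by
      rw [Complex.ofReal_add, ← h1, htrsum]
    exact_mod_cast h2
  -- entrywise formula
  have hWL : ∀ (x : EuclideanSpace ℂ n) (r : n), (WithLp.equiv 2 (n → ℂ)) x r = x r :=
    fun _ _ => rfl
  refine ⟨E i, fun p => hX.eigenvectorBasis i p, fun p => hX.eigenvectorBasis j p, hi, ?_, ?_, ?_⟩
  · intro h0
    apply hX.eigenvectorBasis.orthonormal.ne_zero i
    apply PiLp.ext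
    intro p
    exact congrFun h0 p
  · intro h0
    apply hX.eigenvectorBasis.orthonormal.ne_zero j
    apply PiLp.ext
    intro p
    exact congrFun h0 p
  · intro p q
    have hXpq : X p q = ∑ k, (E k : ℂ) * (hX.eigenvectorBasis k p * conj' (hX.eigenvectorBasis k q)) := by
      conv_lhs => rw [hX.spectral_theorem, Unitary.conjStarAlgAut_apply]
      rw [Matrix.mul_apply]
      congr 1
      funext k
      rw [Matrix.mul_apply]
      rw [Finset.sum_eq_single k]
      · simp only [Matrix.diagonal_apply_eq, Function.comp_apply]
        rw [Matrix.star_apply, Matrix.IsHermitian.eigenvectorUnitary_apply,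
          Matrix.IsHermitian.eigenvectorUnitary_apply, Complex.star_def]
        simp only [hWL, ← hEdef, (show ∀ x : ℝ, (RCLike.ofReal x : ℂ) = Complex.ofReal x from fun _ => rfl)]
        ring
      · intro m _ hm
        rw [Matrix.diagonal_apply_ne _ hm]
        simp
      · intro h; exact absurd (Finset.mem_univ k) h
    rw [hXpq]
    have h3 : ∑ k, (E k : ℂ) * (hX.eigenvectorBasis k p * conj' (hX.eigenvectorBasis k q))
        = (E i : ℂ) * (hX.eigenvectorBasis i p * conj' (hX.eigenvectorBasis i q))
          + (E j : ℂ) * (hX.eigenvectorBasis j p * conj' (hX.eigenvectorBasis j q)) := by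
      have h3a : ∑ k, (E k : ℂ) * (hX.eigenvectorBasis k p * conj' (hX.eigenvectorBasis k q))
          = ∑ k ∈ ({i, j} : Finset n),
            (E k : ℂ) * (hX.eigenvectorBasis k p * conj' (hX.eigenvectorBasis k q)) := by
        apply (Finset.sum_subset (Finset.subset_univ _) _).symm
        intro k _ hk
        simp only [Finset.mem_insert, Finset.mem_singleton] at hk
        push_neg at hk
        rw [hzero k hk.1 hk.2, Complex.ofReal_zero, zero_mul]
      rw [h3a, Finset.sum_pair hij]
    rw [h3]
    have h4 : (E j : ℂ) = -(E i : ℂ) := by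
      have : (E j : ℝ) = -(E i) := by linarith
      rw [this, Complex.ofReal_neg]
    rw [h4]
    simp only [hWL]
    ring

theorem rank_two_ptransp_rank_bound {d : ℕ}
    (X : Matrix (Fin d × Fin d) (Fin d × Fin d) ℂ) (hX : X.IsHermitian)
    (htr : X.trace = 0) (hpt : ptraceH X = 0) (hrk : X.rank = 2) :
    (ptransp X).rank ≤ d ^ 2 - d := by
  classical
  obtain ⟨c, a, b, hc, ha, hb, hXab⟩ := decomp X hX htr hrk
  set A : Matrix (Fin d) (Fin d) ℂ := Matrix.of fun x y => a (x, y) with hAdef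
  set B : Matrix (Fin d) (Fin d) ℂ := Matrix.of fun x y => b (x, y) with hBdef
  have hAe : ∀ x y, A x y = a (x, y) := fun _ _ => rfl
  have hBe : ∀ x y, B x y = b (x, y) := fun _ _ => rfl
  -- Gram condition from partial trace
  have hkey : ∀ j j' : Fin d,
      ∑ i, a (i, j) * conj' (a (i, j')) = ∑ i, b (i, j) * conj' (b (i, j')) := by
    intro j j'
    have h0 : ∑ i, X (i, j) (i, j') = 0 := congrFun (congrFun hpt j) j'
    have h1 : ∑ i, ((c : ℂ) * (a (i, j) * conj' (a (i, j')))
        - (c : ℂ) * (b (i, j) * conj' (b (i, j')))) = 0 := by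
      rw [← h0]
      exact Finset.sum_congr rfl fun i _ => (hXab _ _).symm
    rw [Finset.sum_sub_distrib, ← Finset.mul_sum, ← Finset.mul_sum, sub_eq_zero] at h1
    exact mul_left_cancel₀ (Complex.ofReal_ne_zero.mpr hc) h1
  have hGram : Aᴴ * A = Bᴴ * B := by
    ext j j'
    rw [Matrix.mul_apply, Matrix.mul_apply]
    calc ∑ i, Aᴴ j i * A i j'
        = ∑ i, a (i, j') * conj' (a (i, j)) := by
          apply Finset.sum_congr rfl
          intro i _
          rw [Matrix.conjTranspose_apply, hAe, hAe]
          rw [mul_comm]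
          rfl
      _ = ∑ i, b (i, j') * conj' (b (i, j)) := hkey j' j
      _ = ∑ i, Bᴴ j i * B i j' := by
          apply Finset.sum_congr rfl
          intro i _
          rw [Matrix.conjTranspose_apply, hBe, hBe]
          rw [mul_comm]
          rfl
  obtain ⟨U, hU1, hUA⟩ := exists_unitary_of_gram_eq A B hGram
  have hU2 : U * Uᴴ = 1 := mul_eq_one_comm.mp hU1
  obtain ⟨t, l, htind, htne, htU, htUc⟩ := exists_joint_eigs U hU1 hU2
  have hll : ∀ k, l k * conj' (l k) = 1 := by
    intro k
    have h3 : (Uᴴ * U) *ᵥ t k = t k := by rw [hU1, Matrix.one_mulVec]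
    rw [← Matrix.mulVec_mulVec, htU k, Matrix.mulVec_smul, htUc k, smul_smul] at h3
    have h4 : (l k * conj' (l k) - 1) • t k = 0 := by
      rw [sub_smul, one_smul, h3, sub_self]
    rcases smul_eq_zero.mp h4 with h | h
    · exact sub_eq_zero.mp h
    · exact absurd h (htne k)
  -- construct s
  have hs : ∃ s : Fin d → (Fin d → ℂ), (∀ k, s k ≠ 0) ∧
      ∀ k, U *ᵥ (A *ᵥ star (s k)) = l k • (A *ᵥ star (s k)) := by
    by_cases hinj : Function.Injective A.mulVecLin
    · have hsurj : Function.Surjective A.mulVecLin :=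
        LinearMap.surjective_of_injective hinj
      choose r hr using fun k => hsurj (t k)
      refine ⟨fun k => star (r k), fun k h0 => ?_, fun k => ?_⟩
      · apply htne k
        have h5 : r k = 0 := by
          have := congrArg star h0
          rwa [star_star, star_zero] at this
        rw [← hr k, h5, map_zero]
      · rw [star_star]
        have h6 : A *ᵥ r k = t k := hr k
        rw [h6, htU k]
    · have h7 : LinearMap.ker A.mulVecLin ≠ ⊥ := by
        intro h
        exact hinj (LinearMap.ker_eq_bot.mp h)
      obtain ⟨r, hrmem, hr0⟩ := Submodule.exists_mem_ne_zero_of_ne_bot h7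
      have hAr : A *ᵥ r = 0 := hrmem
      refine ⟨fun _ => star r, fun k h0 => ?_, fun k => ?_⟩
      · apply hr0
        have := congrArg star h0
        rwa [star_star, star_zero] at this
      · rw [star_star, hAr, Matrix.mulVec_zero, smul_zero]
  obtain ⟨s, hs0, hsU⟩ := hs
  set v : Fin d → (Fin d × Fin d → ℂ) := fun k q => conj' (t k q.1) * s k q.2 with hvdef
  -- kernel property
  have hker : ∀ k, (ptransp X).mulVec (v k) = 0 := by
    intro k
    funext p
    show ∑ q, ptransp X p q * v k q = 0
    have hterm : ∀ q : Fin d × Fin d, ptransp X p q * v k q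
        = (c : ℂ) * ((a (q.1, p.2) * conj' (a (p.1, q.2))) * (conj' (t k q.1) * s k q.2))
          - (c : ℂ) * ((b (q.1, p.2) * conj' (b (p.1, q.2))) * (conj' (t k q.1) * s k q.2)) := by
      intro q
      show X (q.1, p.2) (p.1, q.2) * v k q = _
      rw [hXab]
      show _ * (conj' (t k q.1) * s k q.2) = _
      ring
    rw [Finset.sum_congr rfl fun q _ => hterm q, Finset.sum_sub_distrib,
      ← Finset.mul_sum, ← Finset.mul_sum]
    have hfact : ∀ (M : Matrix (Fin d) (Fin d) ℂ) (f : Fin d × Fin d → ℂ),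
        (∀ x y, M x y = f (x, y)) →
        ∑ q : Fin d × Fin d, (f (q.1, p.2) * conj' (f (p.1, q.2))) * (conj' (t k q.1) * s k q.2)
          = conj' ((Mᴴ *ᵥ t k) p.2) * conj' ((M *ᵥ star (s k)) p.1) := by
      intro M f hMf
      rw [Fintype.sum_prod_type]
      have hrow : ∀ q1, ∑ q2, (f (q1, p.2) * conj' (f (p.1, q2))) * (conj' (t k q1) * s k q2)
          = (f (q1, p.2) * conj' (t k q1)) * ∑ q2, conj' (f (p.1, q2)) * s k q2 := by
        intro q1
        rw [Finset.mul_sum]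
        apply Finset.sum_congr rfl
        intro q2 _
        ring
      rw [Finset.sum_congr rfl fun q1 _ => hrow q1, ← Finset.sum_mul]
      have hleft : ∑ q1, f (q1, p.2) * conj' (t k q1) = conj' ((Mᴴ *ᵥ t k) p.2) := by
        show _ = conj' (∑ q1, Mᴴ p.2 q1 * t k q1)
        rw [map_sum]
        apply Finset.sum_congr rfl
        intro q1 _
        rw [_root_.map_mul, Matrix.conjTranspose_apply, hMf]
        simp only [starRingEnd_apply, star_star]
      have hright : ∑ q2, conj' (f (p.1, q2)) * s k q2 = conj' ((M *ᵥ star (s k)) p.1) := by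
        show _ = conj' (∑ q2, M p.1 q2 * star (s k) q2)
        rw [map_sum]
        apply Finset.sum_congr rfl
        intro q2 _
        rw [_root_.map_mul, hMf, Pi.star_apply]
        simp only [starRingEnd_apply, star_star]
      rw [hleft, hright]
    rw [hfact A a hAe, hfact B b hBe]
    have hBt : Bᴴ *ᵥ t k = conj' (l k) • (Aᴴ *ᵥ t k) := by
      rw [hUA, Matrix.conjTranspose_mul, ← Matrix.mulVec_mulVec, htUc k, Matrix.mulVec_smul]
    have hBs : B *ᵥ star (s k) = l k • (A *ᵥ star (s k)) := by
      rw [hUA, ← Matrix.mulVec_mulVec, hsU k]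
    rw [hBt, hBs, Pi.smul_apply, Pi.smul_apply, smul_eq_mul, smul_eq_mul,
      _root_.map_mul, _root_.map_mul, Complex.conj_conj]
    linear_combination (-(c : ℂ) * conj' ((Aᴴ *ᵥ t k) p.2) * conj' ((A *ᵥ star (s k)) p.1)) * (hll k)
  -- linear independence
  have hconj_ind : LinearIndependent ℂ (fun k => (fun x => conj' (t k x))) := by
    rw [Fintype.linearIndependent_iff] at htind ⊢
    intro g hg k
    have h8 : ∀ x, ∑ m, conj' (g m) * t m x = 0 := by
      intro x
      have h9 := congrFun hg x
      have h10 := congrArg conj' h9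
      simp only [Finset.sum_apply, Pi.smul_apply, smul_eq_mul, map_sum, _root_.map_mul,
        Complex.conj_conj, Pi.zero_apply, map_zero] at h10 ⊢
      exact h10
    have h11 := htind (fun m => conj' (g m)) (by
      funext x
      simpa [Finset.sum_apply, Pi.smul_apply, smul_eq_mul] using h8 x) k
    have := congrArg conj' h11
    rwa [Complex.conj_conj, map_zero] at this
  have hind : LinearIndependent ℂ v := by
    rw [Fintype.linearIndependent_iff]
    intro g hg k
    obtain ⟨q2, hq2⟩ := Function.ne_iff.mp (hs0 k)
    have h12 : ∀ m, g m * s m q2 = 0 := by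
      apply Fintype.linearIndependent_iff.mp hconj_ind (fun m => g m * s m q2)
      funext q1
      have h13 := congrFun hg (q1, q2)
      simp only [Finset.sum_apply, Pi.smul_apply, smul_eq_mul, Pi.zero_apply] at h13 ⊢
      rw [← h13]
      apply Finset.sum_congr rfl
      intro m _
      show g m * s m q2 * conj' (t m q1) = g m * (conj' (t m q1) * s m q2)
      ring
    have h14 := h12 k
    rcases mul_eq_zero.mp h14 with h | h
    · exact h
    · exact absurd h hq2
  have hrank := rank_le_of_kernel (ptransp X) v hind hker
  rw [Fintype.card_prod, Fintype.card_fin] at hrank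
  have hdd : d * d = d ^ 2 := (sq d).symm
  omega

end PtranspAux
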